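/- The Antimirov reordering automaton accepts the trace closure: for every regular expression E over Σ and every word u, u ∈ [⟦E⟧] if and only if there exists E′ with E →^{I*} (u, E′) and E′↓. -/

import Mathlib

open RegularExpression
open scoped Classical

universe u

variable {α : Type u}

/-- Two words are independent if every letter of the first is independent
of every letter of the second. -/
def WIndep (I : α → α → Prop) (u v : List α) : Prop :=
  ∀ a ∈ u, ∀ b ∈ v, I a b

/-- Trace equivalence: the least equivalence relation on words containing
all pairs (x ++ [a,b] ++ y, x ++ [b,a] ++ y) with a I b. -/
inductive TrEq (I : α → α → Prop) : List α → List α → Prop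
  | swap (x y : List α) {a b : α} : I a b → TrEq I (x ++ [a, b] ++ y) (x ++ [b, a] ++ y)
  | refl (u : List α) : TrEq I u u
  | symm {u v : List α} : TrEq I u v → TrEq I v u
  | trans {u v w : List α} : TrEq I u v → TrEq I v w → TrEq I u w

/-- Trace closure of a language. -/
def TrClosure (I : α → α → Prop) (L : Set (List α)) : Set (List α) :=
  {w | ∃ z ∈ L, TrEq I w z}

/-- u ⊲ z ⊳ v with exactly n blocks of u: there are nonempty words u₁,…,uₙ and
words v₀,…,vₙ (with v₁,…,v_{n-1} nonempty) such that u = u₁⋯uₙ, v = v₀⋯vₙ,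
z = v₀u₁v₁⋯uₙvₙ and vⱼ I uᵢ whenever j < i. -/
def ScatN (I : α → α → Prop) (n : ℕ) (u z v : List α) : Prop :=
  ∃ us vs : ℕ → List α,
    (∀ i, 1 ≤ i → i ≤ n → us i ≠ []) ∧
    (∀ j, 1 ≤ j → j ≤ n - 1 → vs j ≠ []) ∧
    u = ((List.range n).map (fun i => us (i + 1))).flatten ∧
    v = ((List.range (n + 1)).map vs).flatten ∧
    z = vs 0 ++ ((List.range n).map (fun i => us (i + 1) ++ vs (i + 1))).flatten ∧
    (∀ i j, 1 ≤ i → i ≤ n → j < i → WIndep I (vs j) (us i))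

/-- u ⊲ z ⊳ v -/
def Scat (I : α → α → Prop) (u z v : List α) : Prop :=
  ∃ n, ScatN I n u z v

/-- u ∼⊲ z ⊳ v -/
def EqScat (I : α → α → Prop) (u z v : List α) : Prop :=
  ∃ u', TrEq I u u' ∧ Scat I u' z v

/-- u ∼⊲ z ⊳∼ v -/
def EqScatEq (I : α → α → Prop) (u z v : List α) : Prop :=
  ∃ u' v', TrEq I u u' ∧ Scat I u' z v' ∧ TrEq I v' v

/-- u ∼⊲_N z ⊳∼ v : as EqScatEq, with the number of blocks bounded by N -/
def EqScatEqLe (I : α → α → Prop) (N : ℕ) (u z v : List α) : Prop :=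
  ∃ u' v', TrEq I u u' ∧ (∃ n ≤ N, ScatN I n u' z v') ∧ TrEq I v' v

/-- Reordering concatenation of words. -/
def rconc (I : α → α → Prop) : List α → List α → Set (List α)
  | [], v => {v}
  | a :: u, [] => {a :: u}
  | a :: u, b :: v =>
      (List.cons a) '' rconc I u (b :: v) ∪
      {z | WIndep I (a :: u) [b] ∧ ∃ w ∈ rconc I (a :: u) v, z = b :: w}
termination_by u v => u.length + v.length

/-- Reordering concatenation lifted to languages. -/
def rconcL (I : α → α → Prop) (L L' : Set (List α)) : Set (List α) :=
  {z | ∃ u ∈ L, ∃ v ∈ L', z ∈ rconc I u v}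

/-- The reorderable part of a language w.r.t. a word. -/
def RPart (I : α → α → Prop) (u : List α) (L : Set (List α)) : Set (List α) :=
  {v ∈ L | WIndep I v u}

/-- The reordering derivative of a language along a word. -/
def RDeriv (I : α → α → Prop) (u : List α) (L : Set (List α)) : Set (List α) :=
  {v | ∃ z ∈ L, EqScat I u z v}

/-- Syntactic reorderable part of a regexp w.r.t. a letter. -/
noncomputable def Rexp (I : α → α → Prop) (a : α) : RegularExpression α → RegularExpression α
  | zero => zero
  | epsilon => epsilon
  | char b => if I a b then char b else zero
  | plus E F => plus (Rexp I a E) (Rexp I a F)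
  | comp E F => comp (Rexp I a E) (Rexp I a F)
  | RegularExpression.star E => star (Rexp I a E)

/-- Brzozowski reordering derivative of a regexp along a letter. -/
noncomputable def Dexp (I : α → α → Prop) (a : α) : RegularExpression α → RegularExpression α
  | zero => zero
  | epsilon => zero
  | char b => if a = b then epsilon else zero
  | plus E F => plus (Dexp I a E) (Dexp I a F)
  | comp E F => plus (comp (Dexp I a E) F) (comp (Rexp I a E) (Dexp I a F))
  | RegularExpression.star E => comp (star (Rexp I a E)) (comp (Dexp I a E) (star E))

/-- Syntactic reorderable part along a word. -/
noncomputable def RexpW (I : α → α → Prop) (u : List α) (E : RegularExpression α) :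
    RegularExpression α :=
  u.foldl (fun E a => Rexp I a E) E

/-- Brzozowski reordering derivative along a word. -/
noncomputable def DexpW (I : α → α → Prop) (u : List α) (E : RegularExpression α) :
    RegularExpression α :=
  u.foldl (fun E a => Dexp I a E) E

/-- Antimirov reordering parts-of-derivatives along a letter. -/
inductive Antim (I : α → α → Prop) : RegularExpression α → α → RegularExpression α → Prop
  | chr (a : α) : Antim I (char a) a epsilon
  | plusL {E F : RegularExpression α} {a E'} : Antim I E a E' → Antim I (plus E F) a E'
  | plusR {E F : RegularExpression α} {a F'} : Antim I F a F' → Antim I (plus E F) a F'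
  | compL {E F : RegularExpression α} {a E'} : Antim I E a E' → Antim I (comp E F) a (comp E' F)
  | compR {E F : RegularExpression α} {a F'} :
      Antim I F a F' → Antim I (comp E F) a (comp (Rexp I a E) F')
  | st {E : RegularExpression α} {a E'} :
      Antim I E a E' → Antim I (star E) a (comp (star (Rexp I a E)) (comp E' (star E)))

/-- Antimirov reordering parts-of-derivatives along a word. -/
inductive AntimW (I : α → α → Prop) : RegularExpression α → List α → RegularExpression α → Prop
  | nil (E : RegularExpression α) : AntimW I E [] E
  | snoc {E : RegularExpression α} {u E' a E''} :
      AntimW I E u E' → Antim I E' a E'' → AntimW I E (u ++ [a]) E''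

/-- The dependence graph of a word: vertices are positions; distinct positions
are adjacent when their letters are not independent. -/
def depGraph (I : α → α → Prop) (w : List α) : SimpleGraph (Fin w.length) where
  Adj i j := i ≠ j ∧ ¬(I (w.get i) (w.get j) ∧ I (w.get j) (w.get i))
  symm := by
    constructor
    intro i j h
    exact ⟨h.1.symm, fun hc => h.2 ⟨hc.2, hc.1⟩⟩
  loopless := by
    constructor
    intro i h
    exact h.1 rfl

/-- A word is connected if its dependence graph is connected. -/
def WordConnected (I : α → α → Prop) (w : List α) : Prop :=
  (depGraph I w).Preconnected

/-- Least fixed point star for the trace-closing semantics. -/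
def starI (I : α → α → Prop) (L : Set (List α)) : Set (List α) :=
  sInf {X | {([] : List α)} ∪ rconcL I L X ⊆ X}

/-- Trace-closing semantics of regular expressions. -/
def langI (I : α → α → Prop) : RegularExpression α → Set (List α)
  | zero => ∅
  | epsilon => {[]}
  | char a => {[a]}
  | plus E F => langI I E ∪ langI I F
  | comp E F => rconcL I (langI I E) (langI I F)
  | RegularExpression.star E => starI I (langI I E)

/-- L has (scattering) rank at most N. -/
def HasRankLe (I : α → α → Prop) (L : Set (List α)) (N : ℕ) : Prop :=
  ∀ u v, u ++ v ∈ TrClosure I L → ∃ z ∈ L, EqScatEqLe I N u z v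

/-- L has uniform (scattering) rank at most N. -/
def HasUniformRankLe (I : α → α → Prop) (L : Set (List α)) (N : ℕ) : Prop :=
  ∀ w ∈ TrClosure I L, ∃ z ∈ L, ∀ u v, w = u ++ v → EqScatEqLe I N u z v

/-- Star-connected regular expressions. -/
inductive StarConnected (I : α → α → Prop) : RegularExpression α → Prop
  | zero : StarConnected I zero
  | epsilon : StarConnected I epsilon
  | chr (a : α) : StarConnected I (char a)
  | plus {E F : RegularExpression α} :
      StarConnected I E → StarConnected I F → StarConnected I (plus E F)
  | comp {E F : RegularExpression α} :
      StarConnected I E → StarConnected I F → StarConnected I (comp E F)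
  | st {E : RegularExpression α} :
      StarConnected I E → (∀ w ∈ E.matches', WordConnected I w) → StarConnected I (star E)

/-- Refined Antimirov reordering parts-of-derivatives along a letter. -/
inductive RAntim (I : α → α → Prop) :
    RegularExpression α → α → RegularExpression α → RegularExpression α → Prop
  | chr (a : α) : RAntim I (char a) a epsilon epsilon
  | plusL {E F : RegularExpression α} {a El Er} :
      RAntim I E a El Er → RAntim I (plus E F) a El Er
  | plusR {E F : RegularExpression α} {a Fl Fr} :
      RAntim I F a Fl Fr → RAntim I (plus E F) a Fl Fr
  | compL {E F : RegularExpression α} {a El Er} :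
      RAntim I E a El Er → RAntim I (comp E F) a El (comp Er F)
  | compR {E F : RegularExpression α} {a Fl Fr} :
      RAntim I F a Fl Fr → RAntim I (comp E F) a (comp (Rexp I a E) Fl) Fr
  | st {E : RegularExpression α} {a El Er} :
      RAntim I E a El Er →
      RAntim I (star E) a (comp (star (Rexp I a E)) El) (comp Er (star E))

/-- Refined Antimirov relation lifted to nonempty lists of regexps (unbounded). -/
inductive RAntimL (I : α → α → Prop) :
    List (RegularExpression α) → α → List (RegularExpression α) → Prop
  | split {Γ Δ : List (RegularExpression α)} {E : RegularExpression α} {a El Er} :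
      RAntim I E a El Er →
      RAntimL I (Γ ++ E :: Δ) a (Γ.map (Rexp I a) ++ El :: Er :: Δ)
  | dropL {Γ Δ : List (RegularExpression α)} {E : RegularExpression α} {a El Er} :
      RAntim I E a El Er → [] ∈ El.matches' → Γ ≠ [] →
      RAntimL I (Γ ++ E :: Δ) a (Γ.map (Rexp I a) ++ Er :: Δ)
  | dropR {Γ Δ : List (RegularExpression α)} {E : RegularExpression α} {a El Er} :
      RAntim I E a El Er → [] ∈ Er.matches' → Δ ≠ [] →
      RAntimL I (Γ ++ E :: Δ) a (Γ.map (Rexp I a) ++ El :: Δ)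
  | dropBoth {Γ Δ : List (RegularExpression α)} {E : RegularExpression α} {a El Er} :
      RAntim I E a El Er → [] ∈ El.matches' → [] ∈ Er.matches' → Γ ≠ [] → Δ ≠ [] →
      RAntimL I (Γ ++ E :: Δ) a (Γ.map (Rexp I a) ++ Δ)

/-- Refined Antimirov relation along a word (unbounded). -/
inductive RAntimW (I : α → α → Prop) :
    RegularExpression α → List α → List (RegularExpression α) → Prop
  | nil (E : RegularExpression α) : RAntimW I E [] [E]
  | snoc {E : RegularExpression α} {u Γ a Γ'} :
      RAntimW I E u Γ → RAntimL I Γ a Γ' → RAntimW I E (u ++ [a]) Γ'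

/-- N-bounded refined Antimirov relation lifted to nonempty lists of regexps. -/
inductive RAntimLN (I : α → α → Prop) (N : ℕ) :
    List (RegularExpression α) → α → List (RegularExpression α) → Prop
  | split {Γ Δ : List (RegularExpression α)} {E : RegularExpression α} {a El Er} :
      RAntim I E a El Er → Γ.length + Δ.length < N →
      RAntimLN I N (Γ ++ E :: Δ) a (Γ.map (Rexp I a) ++ El :: Er :: Δ)
  | dropL {Γ Δ : List (RegularExpression α)} {E : RegularExpression α} {a El Er} :
      RAntim I E a El Er → [] ∈ El.matches' → Γ ≠ [] →
      RAntimLN I N (Γ ++ E :: Δ) a (Γ.map (Rexp I a) ++ Er :: Δ)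
  | dropR {Γ Δ : List (RegularExpression α)} {E : RegularExpression α} {a El Er} :
      RAntim I E a El Er → [] ∈ Er.matches' → Δ ≠ [] →
      RAntimLN I N (Γ ++ E :: Δ) a (Γ.map (Rexp I a) ++ El :: Δ)
  | dropBoth {Γ Δ : List (RegularExpression α)} {E : RegularExpression α} {a El Er} :
      RAntim I E a El Er → [] ∈ El.matches' → [] ∈ Er.matches' → Γ ≠ [] → Δ ≠ [] →
      RAntimLN I N (Γ ++ E :: Δ) a (Γ.map (Rexp I a) ++ Δ)

/-- N-bounded refined Antimirov relation along a word. -/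
inductive RAntimWN (I : α → α → Prop) (N : ℕ) :
    RegularExpression α → List α → List (RegularExpression α) → Prop
  | nil (E : RegularExpression α) : RAntimWN I N E [] [E]
  | snoc {E : RegularExpression α} {u Γ a Γ'} :
      RAntimWN I N E u Γ → RAntimLN I N Γ a Γ' → RAntimWN I N E (u ++ [a]) Γ'


section Aux

variable {I : α → α → Prop}

lemma trEq_length {u v : List α} (h : TrEq I u v) : u.length = v.length := by
  induction h with
  | swap x y hab => simp
  | refl u => rfl
  | symm h ih => omega
  | trans h1 h2 ih1 ih2 => omega

lemma trEq_append_right {u v : List α} (w : List α) (h : TrEq I u v) :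
    TrEq I (u ++ w) (v ++ w) := by
  induction h with
  | swap x y hab =>
      have := TrEq.swap (I := I) x (y ++ w) hab
      simpa using this
  | refl u => exact TrEq.refl _
  | symm h ih => exact ih.symm
  | trans h1 h2 ih1 ih2 => exact ih1.trans ih2

lemma trEq_append_left {u v : List α} (w : List α) (h : TrEq I u v) :
    TrEq I (w ++ u) (w ++ v) := by
  induction h with
  | swap x y hab =>
      have := TrEq.swap (I := I) (w ++ x) y hab
      simpa using this
  | refl u => exact TrEq.refl _
  | symm h ih => exact ih.symm
  | trans h1 h2 ih1 ih2 => exact ih1.trans ih2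

lemma trEq_append {u v u' v' : List α} (h1 : TrEq I u u') (h2 : TrEq I v v') :
    TrEq I (u ++ v) (u' ++ v') :=
  (trEq_append_right v h1).trans (trEq_append_left u' h2)

lemma trEq_cons (a : α) {u v : List α} (h : TrEq I u v) : TrEq I (a :: u) (a :: v) :=
  trEq_append_left [a] h

/-- Move an independent letter to the right across a word. -/
lemma trEq_cons_comm (a : α) (x y : List α) (hind : ∀ b ∈ x, I a b) :
    TrEq I (a :: (x ++ y)) (x ++ a :: y) := by
  induction x with
  | nil => exact TrEq.refl _
  | cons b x ih =>
      have h1 : TrEq I (a :: b :: (x ++ y)) (b :: a :: (x ++ y)) := by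
        have := TrEq.swap (I := I) [] (x ++ y) (hind b (by simp))
        simpa using this
      refine h1.trans ?_
      simpa using trEq_cons b (ih fun c hc => hind c (by simp [hc]))

/-- Extraction property. -/
def ExtP (I : α → α → Prop) (w z : List α) : Prop :=
  ∀ a x y, w = x ++ a :: y → (∀ b ∈ x, I a b) →
    ∃ x' y', z = x' ++ a :: y' ∧ (∀ b ∈ x', I a b) ∧ TrEq I (x ++ y) (x' ++ y')

lemma extP_swap (x0 y0 : List α) {c d : α} (hcd : I c d) :
    ExtP I (x0 ++ [c, d] ++ y0) (x0 ++ [d, c] ++ y0) := by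
  intro a x y heq hind
  have heq' : x ++ a :: y = x0 ++ c :: d :: y0 := by simpa using heq.symm
  rcases List.append_eq_append_iff.mp heq' with ⟨t, hx0, hy⟩ | ⟨t, hx, hrest⟩
  · -- x0 = x ++ t, a :: y = t ++ c :: d :: y0
    cases t with
    | nil =>
        simp only [List.append_nil] at hx0
        simp only [List.nil_append, List.cons.injEq] at hy
        obtain ⟨ha2, hy2⟩ := hy
        refine ⟨x ++ [d], y0, ?_, ?_, ?_⟩
        · rw [hx0, ha2]; simp
        · intro b hb
          rcases List.mem_append.mp hb with hb | hb
          · exact hind b hb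
          · simp only [List.mem_singleton] at hb
            rw [hb, ha2]; exact hcd
        · rw [hy2]; simp [TrEq.refl]
    | cons a' t =>
        simp only [List.cons_append, List.cons.injEq] at hy
        obtain ⟨ha2, hy2⟩ := hy
        refine ⟨x, t ++ d :: c :: y0, ?_, hind, ?_⟩
        · rw [hx0, ← ha2]; simp
        · rw [hy2]
          have := TrEq.swap (I := I) (x ++ t) y0 hcd
          simpa using this
  · -- x = x0 ++ t, c :: d :: y0 = t ++ a :: y
    cases t with
    | nil =>
        simp only [List.append_nil] at hx
        simp only [List.nil_append, List.cons.injEq] at hrest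
        obtain ⟨ha2, hy2⟩ := hrest
        subst hx; subst ha2; subst hy2
        refine ⟨x ++ [d], y0, by simp, ?_, by simp [TrEq.refl]⟩
        intro b hb
        rcases List.mem_append.mp hb with hb | hb
        · exact hind b hb
        · simp only [List.mem_singleton] at hb
          subst hb; exact hcd
    | cons c1 t =>
        simp only [List.cons_append, List.cons.injEq] at hrest
        obtain ⟨hc1, hrest2⟩ := hrest
        subst hc1
        cases t with
        | nil =>
            simp only [List.nil_append, List.cons.injEq] at hrest2
            obtain ⟨ha2, hy2⟩ := hrest2
            subst hx; subst ha2; subst hy2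
            refine ⟨x0, c :: y0, by simp, ?_, by simp [TrEq.refl]⟩
            intro b hb
            exact hind b (by simp [hb])
        | cons d1 t =>
            simp only [List.cons_append, List.cons.injEq] at hrest2
            obtain ⟨hd1, hy0⟩ := hrest2
            subst hd1; subst hy0; subst hx
            refine ⟨x0 ++ d :: c :: t, y, by simp, ?_, ?_⟩
            · intro b hb
              apply hind b
              simp only [List.mem_append, List.mem_cons] at hb ⊢
              tauto
            · have := TrEq.swap (I := I) x0 (t ++ y) hcd
              simpa using this

lemma trEq_extP (hsym : Symmetric I) {w z : List α} (h : TrEq I w z) :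
    ExtP I w z ∧ ExtP I z w := by
  induction h with
  | swap x y hab =>
      exact ⟨extP_swap x y hab, extP_swap x y (hsym hab)⟩
  | refl u =>
      constructor <;>
        · intro a x y heq hind
          exact ⟨x, y, heq, hind, TrEq.refl _⟩
  | symm h ih => exact ⟨ih.2, ih.1⟩
  | trans h1 h2 ih1 ih2 =>
      constructor
      · intro a x y heq hind
        obtain ⟨x1, y1, h1e, h1i, h1t⟩ := ih1.1 a x y heq hind
        obtain ⟨x2, y2, h2e, h2i, h2t⟩ := ih2.1 a x1 y1 h1e h1i
        exact ⟨x2, y2, h2e, h2i, h1t.trans h2t⟩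
      · intro a x y heq hind
        obtain ⟨x1, y1, h1e, h1i, h1t⟩ := ih2.2 a x y heq hind
        obtain ⟨x2, y2, h2e, h2i, h2t⟩ := ih1.2 a x1 y1 h1e h1i
        exact ⟨x2, y2, h2e, h2i, h1t.trans h2t⟩

/-- The extraction lemma: if `a :: v ∼ z` then `z = x ++ a :: y` with `a`
independent of `x` and `v ∼ x ++ y`. -/
lemma trEq_cons_extract (hsym : Symmetric I) {a : α} {v z : List α}
    (h : TrEq I (a :: v) z) :
    ∃ x y, z = x ++ a :: y ∧ (∀ b ∈ x, I a b) ∧ TrEq I v (x ++ y) := by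
  obtain ⟨x, y, he, hi, ht⟩ := (trEq_extP hsym h).1 a [] v rfl (by simp)
  exact ⟨x, y, he, hi, by simpa using ht⟩

lemma trEq_nil {z : List α} (h : TrEq I [] z) : z = [] := by
  have := trEq_length h; simpa using this.symm

end Aux

section Aux2

variable {I : α → α → Prop}

lemma mem_trClosure_of_trEq {L : Set (List α)} {w w' : List α}
    (h : TrEq I w w') (hw : w' ∈ TrClosure I L) : w ∈ TrClosure I L := by
  obtain ⟨z, hz, ht⟩ := hw
  exact ⟨z, hz, h.trans ht⟩

lemma self_mem_trClosure {L : Set (List α)} {w : List α} (hw : w ∈ L) :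
    w ∈ TrClosure I L := ⟨w, hw, TrEq.refl w⟩

lemma mem_set_lang {L : Language α} {z : List α} :
    @Membership.mem (List α) (Set (List α)) Set.instMembership L z ↔ z ∈ L := Iff.rfl

lemma nil_mem_trClosure {L : Set (List α)} : ([] : List α) ∈ TrClosure I L ↔ [] ∈ L := by
  constructor
  · rintro ⟨z, hz, ht⟩
    rwa [trEq_nil ht] at hz
  · exact self_mem_trClosure

/-- Semantics of the syntactic reorderable part. -/
lemma mem_Rexp {a : α} {E : RegularExpression α} {w : List α} :
    w ∈ (Rexp I a E).matches' ↔ w ∈ E.matches' ∧ ∀ b ∈ w, I a b := by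
  induction E generalizing w with
  | zero => simp [Rexp, matches']
  | epsilon =>
      simp only [Rexp, matches'_epsilon, Language.mem_one]
      constructor
      · rintro rfl; exact ⟨rfl, by simp⟩
      · rintro ⟨rfl, -⟩; rfl
  | char c =>
      have hR : Rexp I a (char c) = if I a c then char c else zero := rfl
      rw [hR]
      by_cases h : I a c
      · rw [if_pos h]
        simp only [matches'_char]
        constructor
        · intro hw; refine ⟨hw, ?_⟩; intro b hb
          change w = [c] at hw; subst hw
          simp at hb; subst hb; exact h
        · exact fun h => h.1
      · rw [if_neg h, zero_def]
        simp only [matches'_zero]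
        constructor
        · intro hw; exact absurd hw (Set.notMem_empty _)
        · rintro ⟨hw, hi⟩
          simp only [matches'_char] at hw; change w = [c] at hw; subst hw
          exact absurd (hi c (by simp)) h
  | plus E F ihE ihF =>
      simp only [Rexp, plus_def, matches'_add, Language.mem_add] at *
      rw [ihE, ihF]; tauto
  | comp E F ihE ihF =>
      simp only [Rexp, comp_def, matches'_mul, Language.mem_mul] at *
      constructor
      · rintro ⟨u, hu, v, hv, rfl⟩
        obtain ⟨hu1, hu2⟩ := ihE.mp hu
        obtain ⟨hv1, hv2⟩ := ihF.mp hv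
        refine ⟨⟨u, hu1, v, hv1, rfl⟩, ?_⟩
        intro b hb
        rcases List.mem_append.mp hb with hb | hb
        exacts [hu2 b hb, hv2 b hb]
      · rintro ⟨⟨u, hu, v, hv, rfl⟩, hi⟩
        exact ⟨u, ihE.mpr ⟨hu, fun b hb => hi b (by simp [hb])⟩,
          v, ihF.mpr ⟨hv, fun b hb => hi b (by simp [hb])⟩, rfl⟩
  | star E ihE =>
      simp only [Rexp, matches'_star, Language.mem_kstar] at *
      constructor
      · rintro ⟨L, rfl, hL⟩
        refine ⟨⟨L, rfl, fun y hy => (ihE.mp (hL y hy)).1⟩, ?_⟩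
        intro b hb
        obtain ⟨l, hl, hbl⟩ := List.mem_flatten.mp hb
        exact (ihE.mp (hL l hl)).2 b hbl
      · rintro ⟨⟨L, rfl, hL⟩, hi⟩
        refine ⟨L, rfl, fun y hy => ihE.mpr ⟨hL y hy, ?_⟩⟩
        intro b hb
        exact hi b (List.mem_flatten.mpr ⟨y, hy, hb⟩)

/-- Locate a letter occurrence inside a flattened list. -/
lemma flatten_eq_split {zs : List (List α)} {a : α} {x y : List α}
    (h : zs.flatten = x ++ a :: y) :
    ∃ zs1 xk yk zs2, zs = zs1 ++ (xk ++ a :: yk) :: zs2 ∧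
      x = zs1.flatten ++ xk ∧ y = yk ++ zs2.flatten := by
  induction zs generalizing x with
  | nil => simp at h
  | cons z0 zs ih =>
      simp only [List.flatten_cons] at h
      rcases List.append_eq_append_iff.mp h with ⟨t, hx, hjoin⟩ | ⟨t, hz0, hrest⟩
      · obtain ⟨zs1, xk, yk, zs2, h1, h2, h3⟩ := ih hjoin
        exact ⟨z0 :: zs1, xk, yk, zs2, by simp [h1], by simp [hx, h2], h3⟩
      · cases t with
        | nil =>
            simp only [List.append_nil] at hz0
            have hj : zs.flatten = [] ++ a :: y := by simpa using hrest.symm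
            obtain ⟨zs1, xk, yk, zs2, h1, h2, h3⟩ := ih hj
            refine ⟨z0 :: zs1, xk, yk, zs2, by simp [h1], ?_, h3⟩
            simp [hz0, ← h2]
        | cons a' t =>
            obtain ⟨ha, hy⟩ : a = a' ∧ y = t ++ zs.flatten := by simpa using hrest
            subst ha; subst hy
            exact ⟨[], x, t, zs, by simp [hz0], by simp, rfl⟩

end Aux2

section Key

variable {I : α → α → Prop}

/-- Key lemma: single-letter correctness of the Antimirov reordering relation. -/
lemma antim_key (hsym : Symmetric I) (E : RegularExpression α) (a : α) :
    ∀ v : List α, (a :: v) ∈ TrClosure I E.matches' ↔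
      ∃ E', Antim I E a E' ∧ v ∈ TrClosure I E'.matches' := by
  induction E with
  | zero =>
      intro v
      constructor
      · rintro ⟨z, hz, -⟩
        rw [zero_def, matches'_zero] at hz
        exact absurd hz (Set.notMem_empty _)
      · rintro ⟨E', hA, -⟩; cases hA
  | epsilon =>
      intro v
      constructor
      · rintro ⟨z, hz, ht⟩
        rw [one_def, matches'_epsilon, mem_set_lang, Language.mem_one] at hz
        subst hz
        exact absurd (trEq_length ht) (by simp)
      · rintro ⟨E', hA, -⟩; cases hA
  | char c =>
      intro v
      constructor
      · rintro ⟨z, hz, ht⟩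
        rw [matches'_char] at hz; change z = [c] at hz
        subst hz
        obtain ⟨x, y, he, -, ht'⟩ := trEq_cons_extract hsym ht
        cases x with
        | cons b x =>
            obtain ⟨-, hno⟩ : c = b ∧ [] = x ++ a :: y := by simpa using he
            exact absurd hno.symm (by simp)
        | nil =>
            obtain ⟨hc, hy⟩ : c = a ∧ [] = y := by simpa using he
            subst hc
            have hv : v = [] := by
              have := trEq_length ht'
              simp [← hy] at this
              exact this
            subst hv
            refine ⟨epsilon, Antim.chr c, self_mem_trClosure ?_⟩
            rw [one_def, matches'_epsilon, mem_set_lang, Language.mem_one]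
      · rintro ⟨E', hA, hv⟩
        cases hA
        have hv' : v = [] := by
          obtain ⟨z, hz, ht⟩ := hv
          rw [one_def, matches'_epsilon, mem_set_lang, Language.mem_one] at hz
          subst hz
          exact List.length_eq_zero_iff.mp (by simpa using trEq_length ht)
        subst hv'
        exact self_mem_trClosure (by rw [matches'_char]; exact rfl)
  | plus E F ihE ihF =>
      intro v
      constructor
      · rintro ⟨z, hz, ht⟩
        rw [plus_def, matches'_add, mem_set_lang, Language.mem_add] at hz
        rcases hz with hz | hz
        · obtain ⟨E', hA, hv⟩ := (ihE v).mp ⟨z, hz, ht⟩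
          exact ⟨E', Antim.plusL hA, hv⟩
        · obtain ⟨F', hA, hv⟩ := (ihF v).mp ⟨z, hz, ht⟩
          exact ⟨F', Antim.plusR hA, hv⟩
      · rintro ⟨E', hA, hv⟩
        cases hA with
        | plusL h =>
            obtain ⟨z, hz, ht⟩ := (ihE v).mpr ⟨_, h, hv⟩
            refine ⟨z, ?_, ht⟩
            rw [plus_def, matches'_add]
            exact (Language.mem_add _ _ _).mpr (Or.inl hz)
        | plusR h =>
            obtain ⟨z, hz, ht⟩ := (ihF v).mpr ⟨_, h, hv⟩
            refine ⟨z, ?_, ht⟩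
            rw [plus_def, matches'_add]
            exact (Language.mem_add _ _ _).mpr (Or.inr hz)
  | comp E F ihE ihF =>
      intro v
      constructor
      · rintro ⟨z, hz, ht⟩
        rw [comp_def, matches'_mul, mem_set_lang, Language.mem_mul] at hz
        obtain ⟨z1, hz1, z2, hz2, rfl⟩ := hz
        obtain ⟨x, y, he, hi, ht'⟩ := trEq_cons_extract hsym ht
        rcases List.append_eq_append_iff.mp he with ⟨t, hx, hz2'⟩ | ⟨t, hz1', hrest⟩
        · -- x = z1 ++ t, z2 = t ++ a :: y : a occurs in z2
          subst hx
          have haz2 : TrEq I (a :: (t ++ y)) z2 := by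
            rw [hz2']
            exact trEq_cons_comm a t y (fun b hb => hi b (by simp [hb]))
          obtain ⟨F', hA, w2, hw2, htw2⟩ :=
            (ihF (t ++ y)).mp ⟨z2, hz2, haz2⟩
          refine ⟨comp (Rexp I a E) F', Antim.compR hA, z1 ++ w2, ?_, ?_⟩
          · rw [comp_def, matches'_mul]
            exact Language.mem_mul.mpr
              ⟨z1, mem_Rexp.mpr ⟨hz1, fun b hb => hi b (by simp [hb])⟩, w2, hw2, rfl⟩
          · refine ht'.trans ?_
            have := trEq_append_left (I := I) z1 htw2
            simpa using this
        · -- z1 = x ++ t, a :: y = t ++ z2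
          cases t with
          | nil =>
              simp only [List.append_nil] at hz1'
              simp only [List.nil_append] at hrest
              have haz2 : TrEq I (a :: y) z2 := by rw [← hrest]; exact TrEq.refl _
              obtain ⟨F', hA, w2, hw2, htw2⟩ := (ihF y).mp ⟨z2, hz2, haz2⟩
              refine ⟨comp (Rexp I a E) F', Antim.compR hA,
                x ++ w2, ?_, ht'.trans (trEq_append_left x htw2)⟩
              rw [comp_def, matches'_mul]
              exact Language.mem_mul.mpr
                ⟨x, mem_Rexp.mpr ⟨hz1' ▸ hz1, hi⟩, w2, hw2, rfl⟩
          | cons a' t =>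
              obtain ⟨ha, hy⟩ : a = a' ∧ y = t ++ z2 := by simpa using hrest
              subst ha; subst hy
              have haz1 : TrEq I (a :: (x ++ t)) z1 := by
                rw [hz1']; exact trEq_cons_comm a x t hi
              obtain ⟨E', hA, w1, hw1, htw1⟩ := (ihE (x ++ t)).mp ⟨z1, hz1, haz1⟩
              refine ⟨comp E' F, Antim.compL hA, w1 ++ z2, ?_, ?_⟩
              · rw [comp_def, matches'_mul]
                exact Language.mem_mul.mpr ⟨w1, hw1, z2, hz2, rfl⟩
              · refine ht'.trans ?_
                have := trEq_append_right (I := I) z2 htw1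
                simpa using this
      · rintro ⟨G, hA, hv⟩
        cases hA with
        | @compL _ _ _ E' hE =>
            obtain ⟨z, hz, ht⟩ := hv
            rw [comp_def, matches'_mul, mem_set_lang, Language.mem_mul] at hz
            obtain ⟨w1, hw1, w2, hw2, rfl⟩ := hz
            obtain ⟨z1, hz1, ht1⟩ := (ihE w1).mpr ⟨E', hE, self_mem_trClosure hw1⟩
            refine ⟨z1 ++ w2, ?_, ?_⟩
            · rw [comp_def, matches'_mul]
              exact Language.mem_mul.mpr ⟨z1, hz1, w2, hw2, rfl⟩
            · have h0 : TrEq I (a :: v) (a :: (w1 ++ w2)) := trEq_cons a ht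
              refine h0.trans ?_
              have := trEq_append_right (I := I) w2 ht1
              simpa using this
        | @compR _ _ _ F' hF =>
            obtain ⟨z, hz, ht⟩ := hv
            rw [comp_def, matches'_mul, mem_set_lang, Language.mem_mul] at hz
            obtain ⟨w1, hw1, w2, hw2, rfl⟩ := hz
            obtain ⟨hw1E, hw1I⟩ := mem_Rexp.mp hw1
            obtain ⟨z2, hz2, ht2⟩ := (ihF w2).mpr ⟨F', hF, self_mem_trClosure hw2⟩
            refine ⟨w1 ++ z2, ?_, ?_⟩
            · rw [comp_def, matches'_mul]
              exact Language.mem_mul.mpr ⟨w1, hw1E, z2, hz2, rfl⟩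
            · have h1 : TrEq I (a :: v) (a :: (w1 ++ w2)) := trEq_cons a ht
              have h2 : TrEq I (a :: (w1 ++ w2)) (w1 ++ a :: w2) :=
                trEq_cons_comm a w1 w2 hw1I
              exact (h1.trans h2).trans (trEq_append_left w1 ht2)
  | star E ihE =>
      intro v
      constructor
      · rintro ⟨z, hz, ht⟩
        rw [matches'_star, mem_set_lang, Language.mem_kstar] at hz
        obtain ⟨zs, rfl, hzs⟩ := hz
        obtain ⟨x, y, he, hi, ht'⟩ := trEq_cons_extract hsym ht
        obtain ⟨zs1, xk, yk, zs2, hzse, hx, hy⟩ := flatten_eq_split he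
        subst hx; subst hy
        have hik : ∀ b ∈ xk, I a b := fun b hb => hi b (by simp [hb])
        have hzk : (xk ++ a :: yk) ∈ E.matches' := hzs _ (by simp [hzse])
        have haz : TrEq I (a :: (xk ++ yk)) (xk ++ a :: yk) := trEq_cons_comm a xk yk hik
        obtain ⟨E', hA, w, hw, htw⟩ := (ihE (xk ++ yk)).mp ⟨_, hzk, haz⟩
        refine ⟨comp ((Rexp I a E).star) (comp E' E.star), Antim.st hA,
          zs1.flatten ++ (w ++ zs2.flatten), ?_, ?_⟩
        · rw [comp_def, matches'_mul]
          refine Language.mem_mul.mpr ⟨zs1.flatten, ?_, w ++ zs2.flatten, ?_, rfl⟩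
          · rw [matches'_star, Language.mem_kstar]
            refine ⟨zs1, rfl, fun y1 hy1 => mem_Rexp.mpr ⟨hzs _ (by simp [hzse, hy1]), ?_⟩⟩
            intro b hb
            exact hi b (List.mem_append.mpr (Or.inl (List.mem_flatten.mpr ⟨y1, hy1, hb⟩)))
          · rw [comp_def, matches'_mul]
            refine Language.mem_mul.mpr ⟨w, hw, zs2.flatten, ?_, rfl⟩
            rw [matches'_star, Language.mem_kstar]
            exact ⟨zs2, rfl, fun y2 hy2 => hzs _ (by simp [hzse, hy2])⟩
        · refine ht'.trans ?_
          have := trEq_append_left (I := I) zs1.flatten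
            (trEq_append_right (I := I) zs2.flatten htw)
          simpa using this
      · rintro ⟨G, hA, hv⟩
        cases hA with
        | @st _ _ E' hE =>
            obtain ⟨z, hz, ht⟩ := hv
            rw [comp_def, matches'_mul, mem_set_lang, Language.mem_mul] at hz
            obtain ⟨p, hp, q, hq, rfl⟩ := hz
            rw [matches'_star, Language.mem_kstar] at hp
            obtain ⟨ps, rfl, hps⟩ := hp
            rw [comp_def, matches'_mul, Language.mem_mul] at hq
            obtain ⟨w, hw, s, hs, rfl⟩ := hq
            rw [matches'_star, Language.mem_kstar] at hs
            obtain ⟨ss, rfl, hss⟩ := hs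
            obtain ⟨zk, hzk, htk⟩ := (ihE w).mpr ⟨E', hE, self_mem_trClosure hw⟩
            refine ⟨ps.flatten ++ (zk ++ ss.flatten), ?_, ?_⟩
            · rw [matches'_star, mem_set_lang, Language.mem_kstar]
              refine ⟨ps ++ zk :: ss, by simp, ?_⟩
              intro y hy
              rcases List.mem_append.mp hy with hy | hy
              · exact (mem_Rexp.mp (hps _ hy)).1
              · rcases List.mem_cons.mp hy with rfl | hy
                exacts [hzk, hss _ hy]
            · have hip : ∀ b ∈ ps.flatten, I a b := by
                intro b hb
                obtain ⟨l, hl, hbl⟩ := List.mem_flatten.mp hb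
                exact (mem_Rexp.mp (hps _ hl)).2 b hbl
              have h1 : TrEq I (a :: v) (a :: (ps.flatten ++ (w ++ ss.flatten))) :=
                trEq_cons a ht
              have h2 : TrEq I (a :: (ps.flatten ++ (w ++ ss.flatten)))
                  (ps.flatten ++ a :: (w ++ ss.flatten)) :=
                trEq_cons_comm a ps.flatten _ hip
              refine (h1.trans h2).trans (trEq_append_left ps.flatten ?_)
              have := trEq_append_right (I := I) ss.flatten htk
              simpa using this

end Key
section Final

variable {I : α → α → Prop}

lemma antimW_nil_eq {E E' : RegularExpression α} (h : AntimW I E [] E') : E' = E := by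
  generalize hw : ([] : List α) = w at h
  induction h with
  | nil => rfl
  | snoc h1 h2 ih => exact absurd hw (by simp)

lemma antimW_cons {E E' E'' : RegularExpression α} {a : α} {u : List α}
    (h1 : Antim I E a E') (h2 : AntimW I E' u E'') : AntimW I E (a :: u) E'' := by
  induction h2 with
  | nil => exact AntimW.snoc (AntimW.nil E) h1
  | snoc hW hA ih => exact AntimW.snoc ih hA

lemma antimW_cons_inv {E E'' : RegularExpression α} {a : α} {u : List α}
    (h : AntimW I E (a :: u) E'') :
    ∃ E', Antim I E a E' ∧ AntimW I E' u E'' := by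
  generalize hw : a :: u = w at h
  induction h generalizing a u with
  | nil => exact absurd hw (by simp)
  | snoc h1 h2 ih =>
      rename_i u0 E1 b E2
      cases u0 with
      | nil =>
          obtain ⟨rfl, rfl⟩ : b = a ∧ ([] : List α) = u := by simpa using hw.symm
          rw [antimW_nil_eq h1] at h2
          exact ⟨E2, h2, AntimW.nil E2⟩
      | cons c u0' =>
          obtain ⟨rfl, hu⟩ : c = a ∧ u0' ++ [b] = u := by simpa using hw.symm
          obtain ⟨E', hA, hW⟩ := ih rfl
          exact ⟨E', hA, hu ▸ AntimW.snoc hW h2⟩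

end Final

/-- u ∈ [⟦E⟧] iff ∃ E′, E →^{I*} (u, E′) and E′↓. -/
theorem stmt10 {α : Type u} [Fintype α] (I : α → α → Prop)
    (hirr : Irreflexive I) (hsym : Symmetric I) (E : RegularExpression α) (u : List α) :
    u ∈ TrClosure I E.matches' ↔ ∃ E', AntimW I E u E' ∧ [] ∈ E'.matches' := by
  induction u generalizing E with
  | nil =>
      rw [nil_mem_trClosure (L := E.matches')]
      constructor
      · intro h; exact ⟨E, AntimW.nil E, h⟩
      · rintro ⟨E', hW, h⟩
        rwa [antimW_nil_eq hW] at h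
  | cons a u ih =>
      rw [antim_key hsym E a u]
      constructor
      · rintro ⟨E', hA, hu⟩
        obtain ⟨E'', hW, hn⟩ := (ih (E := E')).mp hu
        exact ⟨E'', antimW_cons hA hW, hn⟩
      · rintro ⟨E'', hW, hn⟩
        obtain ⟨E', hA, hW'⟩ := antimW_cons_inv hW
        exact ⟨E', hA, (ih (E := E')).mpr ⟨E'', hW', hn⟩⟩
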